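/- Let S be a substring-free set of strings over the DNA alphabet and let C = s'_{i1}, s'_{i2}, …, s'_{ih}, s'_{i1} and D = s'_{j1}, s'_{j2}, …, s'_{jg}, s'_{j1} be two distinct cycles in an optimal cycle cover CYC(G_S). Let e = ⟨s'_{i1},…,s'_{ih}⟩ and f = ⟨s'_{j1},…,s'_{jg}⟩. Then e and f are inequivalent; moreover, the pairs (e, f̄^R), (ē^R, f), and (ē^R, f̄^R) are also inequivalent. -/

import Mathlib

/-- The DNA alphabet. -/
inductive DNA : Type
  | A | T | G | C
  deriving DecidableEq, Repr

/-- Complement of a DNA base: a↔t, g↔c. -/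
def DNA.compl : DNA → DNA
  | .A => .T
  | .T => .A
  | .G => .C
  | .C => .G

/-- Strings over the DNA alphabet. -/
abbrev Str : Type := List DNA

/-- Reverse complement of a string. -/
def rc (s : Str) : Str := (s.map DNA.compl).reverse

/-- An approximate solution for the SCS-RC instance `S`: a string containing,
for each `s ∈ S`, either `s` or its reverse complement as a substring. -/
def ApproxSol (S : Finset Str) (u : Str) : Prop :=
  ∀ s ∈ S, s <:+: u ∨ rc s <:+: u

/-- `OPT S` is the minimum length of an approximate solution for the SCS-RC instance `S`. -/
noncomputable def OPT (S : Finset Str) : ℕ :=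
  sInf {n | ∃ u : Str, ApproxSol S u ∧ u.length = n}

/-- `S` is substring-free: no string of `S ∪ S̄^R` is a substring of another. -/
def SubstrFree (S : Finset Str) : Prop :=
  ∀ x, (x ∈ S ∨ rc x ∈ S) → ∀ y, (y ∈ S ∨ rc y ∈ S) → x ≠ y → ¬ x <:+: y

/-- `ov x y`: the length of the longest string `v` such that `x = u ++ v` and
`y = v ++ w` for nonempty `u`, `w`. -/
noncomputable def ov (x y : Str) : ℕ :=
  sSup {k | ∃ v : Str, v.length = k ∧ (∃ u : Str, u ≠ [] ∧ x = u ++ v) ∧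
        (∃ w : Str, w ≠ [] ∧ y = v ++ w)}

/-- `prefStr x y = pref(x, y)`: the prefix of `x` with respect to `y`. -/
noncomputable def prefStr (x y : Str) : Str := x.take (x.length - ov x y)

/-- `distStr x y = dist(x, y) = |x| - ov(x, y)`. -/
noncomputable def distStr (x y : Str) : ℕ := x.length - ov x y

/-- The merge `⟨x, y⟩ = pref(x, y) ++ y`. -/
noncomputable def mergeStr (x y : Str) : Str := prefStr x y ++ y

/-- `superstr [x1, …, xr] = ⟨x1, …, xr⟩ = pref(x1,x2) ⋯ pref(x_{r-1},x_r) ++ x_r`. -/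
noncomputable def superstr : List Str → Str
  | [] => []
  | [x] => x
  | x :: y :: rest => prefStr x y ++ superstr (y :: rest)

/-- `‖S‖`: the total length of the strings of the finite set `S`. -/
def normS (S : Finset Str) : ℕ := ∑ s ∈ S, s.length

/-- Pairs `(x, y)` of strings from the collection `S` or their reverse complements,
with `x = y`, or with `x ≠ y` and `rc x ≠ y`, as considered by MGREEDY-RC. -/
def ValidPair (S : Finset Str) (x y : Str) : Prop :=
  (x ∈ S ∨ rc x ∈ S) ∧ (y ∈ S ∨ rc y ∈ S) ∧ (x = y ∨ (x ≠ y ∧ rc x ≠ y))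

/-- `MGreedyExec S T`: some execution of MGREEDY-RC starting from the collection `S`
(under some tie-breaking among pairs of maximum overlap) produces the set `T`. -/
inductive MGreedyExec : Finset Str → Finset Str → Prop
  | done : MGreedyExec ∅ ∅
  | close (S T : Finset Str) (x : Str)
      (hx : x ∈ S ∨ rc x ∈ S)
      (hmax : ∀ a b, ValidPair S a b → ov a b ≤ ov x x)
      (h : MGreedyExec (S \ {x, rc x}) T) :
      MGreedyExec S (insert x T)
  | merge (S T : Finset Str) (x y : Str)
      (hx : x ∈ S ∨ rc x ∈ S) (hy : y ∈ S ∨ rc y ∈ S)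
      (hne : x ≠ y) (hrc : rc x ≠ y)
      (hmax : ∀ a b, ValidPair S a b → ov a b ≤ ov x y)
      (h : MGreedyExec (insert (mergeStr x y) (S \ {x, rc x, y, rc y})) T) :
      MGreedyExec S T

/-- `GreedyExec S u`: some execution of GREEDY-RC starting from the collection `S`
(under some tie-breaking among pairs of maximum overlap) outputs the string `u`. -/
inductive GreedyExec : Finset Str → Str → Prop
  | single (x : Str) : GreedyExec {x} x
  | merge (S : Finset Str) (u x y : Str)
      (hx : x ∈ S ∨ rc x ∈ S) (hy : y ∈ S ∨ rc y ∈ S)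
      (hne : x ≠ y) (hrc : rc x ≠ y)
      (hmax : ∀ a b, (a ∈ S ∨ rc a ∈ S) → (b ∈ S ∨ rc b ∈ S) → a ≠ b → rc a ≠ b →
        ov a b ≤ ov x y)
      (hcard : 1 < S.card)
      (h : GreedyExec (insert (mergeStr x y) (S \ {x, rc x, y, rc y})) u) :
      GreedyExec S u

/-- Reverse complement of a path: the path of the reverse complements, reversed. -/
def rcPath (p : List Str) : List Str := (p.map rc).reverse

/-- Valid pairs for the path-level description of MGREEDY-RC, where each collection
element is the path of original strings composing it, its string value being `superstr`. -/
def ValidPairP (P : Finset (List Str)) (p q : List Str) : Prop :=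
  (p ∈ P ∨ rcPath p ∈ P) ∧ (q ∈ P ∨ rcPath q ∈ P) ∧
  (superstr p = superstr q ∨ (superstr p ≠ superstr q ∧ rc (superstr p) ≠ superstr q))

/-- `MGreedyCyc P C`: the path-level description of an execution of MGREEDY-RC.
Starting from the collection of paths `P`, merging the paths `p` and `q` (adding the
edge from the last vertex of `p` to the first of `q`) when the corresponding strings
are merged, and closing the path `p` into the cycle `p` (with the edge from its last
vertex to its first) when the corresponding string is moved to `T`, some execution
produces the set of closed cycles `C`. -/
inductive MGreedyCyc : Finset (List Str) → Finset (List Str) → Prop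
  | done : MGreedyCyc ∅ ∅
  | close (P C : Finset (List Str)) (p : List Str)
      (hp : p ∈ P ∨ rcPath p ∈ P)
      (hmax : ∀ q₁ q₂, ValidPairP P q₁ q₂ →
        ov (superstr q₁) (superstr q₂) ≤ ov (superstr p) (superstr p))
      (h : MGreedyCyc (P \ {p, rcPath p}) C) :
      MGreedyCyc P (insert p C)
  | merge (P C : Finset (List Str)) (p q : List Str)
      (hp : p ∈ P ∨ rcPath p ∈ P) (hq : q ∈ P ∨ rcPath q ∈ P)
      (hne : superstr p ≠ superstr q) (hrc : rc (superstr p) ≠ superstr q)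
      (hmax : ∀ q₁ q₂, ValidPairP P q₁ q₂ →
        ov (superstr q₁) (superstr q₂) ≤ ov (superstr p) (superstr q))
      (h : MGreedyCyc (insert (p ++ q) (P \ {p, rcPath p, q, rcPath q})) C) :
      MGreedyCyc P C

/-- The weight of the cycle `x1, …, xr, x1` given by the list `[x1, …, xr]`:
`Σ_{i=1}^{r} dist(x_i, x_{i+1})` with indices modulo `r`. -/
noncomputable def cycleWeight (c : List Str) : ℕ :=
  ((c.zip (c.rotate 1)).map fun p => distStr p.1 p.2).sum

/-- `C` is a cycle cover of the distance graph `G_S`: a set of vertex-disjoint cycles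
on vertices of `S ∪ S̄^R` such that for each `s ∈ S` exactly one of `s` and `rc s`
is contained in the cycles. -/
def IsCycleCover (S : Finset Str) (C : Finset (List Str)) : Prop :=
  (∀ c ∈ C, c ≠ []) ∧
  (∀ c ∈ C, c.Nodup) ∧
  (∀ c ∈ C, ∀ d ∈ C, c ≠ d → ∀ x ∈ c, x ∉ d) ∧
  (∀ c ∈ C, ∀ x ∈ c, x ∈ S ∨ rc x ∈ S) ∧
  (∀ s ∈ S, Xor' (∃ c ∈ C, s ∈ c) (∃ c ∈ C, rc s ∈ c))

/-- The total weight of a cycle cover. -/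
noncomputable def coverWeight (C : Finset (List Str)) : ℕ := ∑ c ∈ C, cycleWeight c

/-- `minCoverWeight S = w(CYC(G_S))`: the minimum total weight of a cycle cover of `G_S`. -/
noncomputable def minCoverWeight (S : Finset Str) : ℕ :=
  sInf {n | ∃ C : Finset (List Str), IsCycleCover S C ∧ coverWeight C = n}

/-- `x` is a factor of `s`: `s = x^i ++ y` for some `i ≥ 1` and some prefix `y` of `x`. -/
def IsFactor (x s : Str) : Prop :=
  x ≠ [] ∧ ∃ i : ℕ, 1 ≤ i ∧ ∃ y : Str, y <+: x ∧ s = (List.replicate i x).flatten ++ y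

/-- `period s`: the length of the shortest factor of `s`. -/
noncomputable def periodStr (s : Str) : ℕ :=
  sInf {k | ∃ x : Str, IsFactor x s ∧ x.length = k}

open Classical in
/-- `factorStr s`: a shortest factor of `s`. -/
noncomputable def factorStr (s : Str) : Str :=
  if h : ∃ x : Str, IsFactor x s ∧ x.length = periodStr s then h.choose else []

/-- Two strings are equivalent if the factor of one is a cyclic shift of the factor
of the other. -/
def EquivStr (x y : Str) : Prop :=
  ∃ e f : Str, factorStr x = e ++ f ∧ factorStr y = f ++ e
section Aux

open List

lemma compl_compl' (b : DNA) : b.compl.compl = b := by cases b <;> rfl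

lemma rc_rc (s : Str) : rc (rc s) = s := by
  simp [rc, List.map_reverse, List.map_map, Function.comp_def, compl_compl']

lemma rc_length (s : Str) : (rc s).length = s.length := by simp [rc]

lemma rc_nil : rc [] = ([] : Str) := rfl

lemma rc_eq_nil_iff (s : Str) : rc s = [] ↔ s = [] := by
  constructor
  · intro h; have := congrArg List.length h; simp [rc_length] at this; exact this
  · rintro rfl; rfl

lemma rc_append (s t : Str) : rc (s ++ t) = rc t ++ rc s := by simp [rc]

lemma rc_injective : Function.Injective rc :=
  Function.LeftInverse.injective rc_rc

lemma rc_infix {s t : Str} (h : s <:+: t) : rc s <:+: rc t := by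
  unfold rc
  exact (List.reverse_infix).mpr (h.map _)

-- ov basics
lemma ovSet_bddAbove (x y : Str) :
    BddAbove {k | ∃ v : Str, v.length = k ∧ (∃ u : Str, u ≠ [] ∧ x = u ++ v) ∧
        (∃ w : Str, w ≠ [] ∧ y = v ++ w)} := by
  refine ⟨x.length, ?_⟩
  rintro k ⟨v, rfl, ⟨u, hu, rfl⟩, -⟩
  simp

lemma le_ov {x y v u w : Str} (hu : u ≠ []) (hw : w ≠ []) (hx : x = u ++ v)
    (hy : y = v ++ w) : v.length ≤ ov x y :=
  le_csSup (ovSet_bddAbove x y) ⟨v, rfl, ⟨u, hu, hx⟩, ⟨w, hw, hy⟩⟩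

lemma ov_lt_length {x : Str} (y : Str) (hx : x ≠ []) : ov x y < x.length := by
  have h1 : ov x y ≤ x.length - 1 := by
    apply csSup_le'
    rintro k ⟨v, rfl, ⟨u, hu, rfl⟩, -⟩
    have : 1 ≤ u.length := List.length_pos_iff.mpr hu
    simp only [List.length_append]; omega
  have : 1 ≤ x.length := List.length_pos_iff.mpr hx
  omega

lemma one_le_distStr {x : Str} (y : Str) (hx : x ≠ []) : 1 ≤ distStr x y := by
  have := ov_lt_length y hx
  unfold distStr; omega

lemma distStr_le_length (x y : Str) : distStr x y ≤ x.length := Nat.sub_le _ _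

lemma distStr_le_of_ov {x y v u w : Str} (hu : u ≠ []) (hw : w ≠ []) (hx : x = u ++ v)
    (hy : y = v ++ w) : distStr x y ≤ x.length - v.length := by
  have := le_ov hu hw hx hy
  unfold distStr; omega

lemma prefix_mergeStr (x y : Str) : x <+: prefStr x y ++ y := by
  by_cases h : Set.Nonempty {k | ∃ v : Str, v.length = k ∧ (∃ u : Str, u ≠ [] ∧ x = u ++ v) ∧
        (∃ w : Str, w ≠ [] ∧ y = v ++ w)}
  · have hm := Nat.sSup_mem h (ovSet_bddAbove x y)
    obtain ⟨v, hv, ⟨u, hu, hxu⟩, ⟨w, hw, hyv⟩⟩ := hm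
    have hov : ov x y = v.length := hv.symm
    have hpre : prefStr x y = u := by
      rw [prefStr, hov, hxu]
      simp [List.length_append]
    rw [hpre, hxu, hyv, ← List.append_assoc]
    exact ⟨w, rfl⟩
  · have hov : ov x y = 0 := by
      rw [Set.not_nonempty_iff_eq_empty] at h
      show sSup _ = 0
      rw [h]; exact csSup_empty
    rw [prefStr, hov]
    simp
end Aux
section Aux2
open List

/-- Path weight: sum of distances of consecutive elements. -/
noncomputable def pathW : List Str → ℕ
  | [] => 0
  | [_] => 0
  | x :: y :: r => distStr x y + pathW (y :: r)

lemma prefStr_length (x y : Str) : (prefStr x y).length = distStr x y := by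
  simp [prefStr, distStr]

lemma superstr_cons_cons (x y : Str) (r : List Str) :
    superstr (x :: y :: r) = prefStr x y ++ superstr (y :: r) := rfl

lemma head_prefix_superstr : ∀ (r : List Str) (x : Str), x <+: superstr (x :: r) := by
  intro r
  induction r with
  | nil => intro x; exact List.prefix_refl x
  | cons y r ih =>
    intro x
    rw [superstr_cons_cons]
    have h1 : x <+: prefStr x y ++ y := prefix_mergeStr x y
    have h2 : y <+: superstr (y :: r) := ih y
    obtain ⟨t, ht⟩ := h2
    calc x <+: prefStr x y ++ y := h1
      _ <+: prefStr x y ++ superstr (y :: r) := by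
          rw [← ht, ← List.append_assoc]; exact ⟨t, rfl⟩

lemma getLast_suffix_superstr : ∀ (r : List Str) (x : Str),
    (x :: r).getLast (List.cons_ne_nil _ _) <:+ superstr (x :: r) := by
  intro r
  induction r with
  | nil => intro x; exact List.suffix_refl x
  | cons y r ih =>
    intro x
    rw [superstr_cons_cons]
    have := ih y
    rw [List.getLast_cons (List.cons_ne_nil _ _)]
    exact this.trans (List.suffix_append _ _)

lemma mem_infix_superstr : ∀ (l : List Str) (z : Str), z ∈ l → z <:+: superstr l := by
  intro l
  induction l with
  | nil => intro z h; simp at h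
  | cons x r ih =>
    intro z hz
    rcases List.mem_cons.mp hz with rfl | hz
    · exact (head_prefix_superstr r z).isInfix
    · match r, hz with
      | y :: r', hz =>
        rw [superstr_cons_cons]
        exact ((ih z hz).trans (List.suffix_append _ _).isInfix)

lemma superstr_prefix_snoc : ∀ (l : List Str) (z : Str), l ≠ [] →
    superstr l <+: superstr (l ++ [z]) := by
  intro l
  induction l with
  | nil => intro z h; exact absurd rfl h
  | cons x r ih =>
    intro z _
    cases r with
    | nil => exact prefix_mergeStr x z
    | cons y r' =>
      have h2 : superstr ((x :: y :: r') ++ [z]) = prefStr x y ++ superstr ((y :: r') ++ [z]) := rfl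
      rw [superstr_cons_cons, h2]
      exact (List.prefix_append_right_inj _).mpr (ih z (List.cons_ne_nil _ _))

lemma length_superstr : ∀ (r : List Str) (x : Str),
    (superstr (x :: r)).length = pathW (x :: r) + ((x :: r).getLast (List.cons_ne_nil _ _)).length := by
  intro r
  induction r with
  | nil => intro x; simp [superstr, pathW]
  | cons y r ih =>
    intro x
    rw [superstr_cons_cons, List.length_append, prefStr_length, ih y,
      List.getLast_cons (List.cons_ne_nil _ _)]
    show distStr x y + _ = pathW (x :: y :: r) + _
    rw [show pathW (x :: y :: r) = distStr x y + pathW (y :: r) from rfl]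
    omega

lemma pathW_snoc : ∀ (l : List Str) (z : Str) (h : l ≠ []),
    pathW (l ++ [z]) = pathW l + distStr (l.getLast h) z := by
  intro l
  induction l with
  | nil => intro z h; exact absurd rfl h
  | cons x r ih =>
    intro z _
    cases r with
    | nil => simp [pathW]
    | cons y r' =>
      have h1 : (x :: y :: r') ++ [z] = x :: ((y :: r') ++ [z]) := rfl
      rw [h1]
      show distStr x y + pathW ((y :: r') ++ [z]) = _
      rw [ih z (List.cons_ne_nil _ _), List.getLast_cons (List.cons_ne_nil _ _)]
      show _ = pathW (x :: y :: r') + _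
      rw [show pathW (x :: y :: r') = distStr x y + pathW (y :: r') from rfl]
      omega

lemma zip_wrap_sum : ∀ (xs : List Str) (x w : Str),
    (((x :: xs).zip (xs ++ [w])).map fun p => distStr p.1 p.2).sum
      = pathW (x :: xs) + distStr ((x :: xs).getLast (List.cons_ne_nil _ _)) w := by
  intro xs
  induction xs with
  | nil => intro x w; simp [pathW]
  | cons y r ih =>
    intro x w
    have h1 : ((x :: y :: r).zip ((y :: r) ++ [w])) = (x, y) :: ((y :: r).zip (r ++ [w])) := rfl
    rw [h1]
    simp only [List.map_cons, List.sum_cons, ih y w]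
    rw [List.getLast_cons (List.cons_ne_nil _ _)]
    show distStr x y + _ = pathW (x :: y :: r) + _
    rw [show pathW (x :: y :: r) = distStr x y + pathW (y :: r) from rfl]
    omega

lemma cycleWeight_eq (x : Str) (xs : List Str) :
    cycleWeight (x :: xs) = pathW (x :: xs)
      + distStr ((x :: xs).getLast (List.cons_ne_nil _ _)) x := by
  rw [cycleWeight, show (x :: xs).rotate 1 = xs ++ [x] by
    rw [List.rotate_cons_succ, List.rotate_zero]]
  exact zip_wrap_sum xs x x

lemma one_le_cycleWeight (x : Str) (xs : List Str)
    (h : ∀ z ∈ x :: xs, z ≠ []) : 1 ≤ cycleWeight (x :: xs) := by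
  rw [cycleWeight_eq]
  have := one_le_distStr x (h _ (List.getLast_mem (List.cons_ne_nil _ _)))
  omega

end Aux2
section Aux3
open List

/-- `pw u K = u^K`. -/
def pw (u : Str) (K : ℕ) : Str := (List.replicate K u).flatten

lemma pw_zero (u : Str) : pw u 0 = [] := rfl

lemma pw_succ (u : Str) (K : ℕ) : pw u (K + 1) = u ++ pw u K := by
  simp [pw, List.replicate_succ]

lemma pw_add (u : Str) (a b : ℕ) : pw u (a + b) = pw u a ++ pw u b := by
  show (List.replicate (a + b) u).flatten = (List.replicate a u).flatten ++ (List.replicate b u).flatten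
  rw [List.replicate_add, List.flatten_append]

lemma pw_one (u : Str) : pw u 1 = u := by
  show (List.replicate 1 u).flatten = u
  rw [List.replicate_one, List.flatten_cons, List.flatten_nil, List.append_nil]

lemma pw_comm (u : Str) (K : ℕ) : u ++ pw u K = pw u K ++ u := by
  have h1 : pw u (1 + K) = pw u 1 ++ pw u K := pw_add u 1 K
  have h2 : pw u (K + 1) = pw u K ++ pw u 1 := pw_add u K 1
  rw [pw_one] at h1 h2
  rw [← h1, Nat.add_comm, h2]

lemma pw_prefix_mono (u : Str) {a b : ℕ} (h : a ≤ b) : pw u a <+: pw u b := by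
  obtain ⟨j, rfl⟩ := Nat.exists_eq_add_of_le h
  rw [pw_add]; exact ⟨_, rfl⟩

lemma pw_conj (a b : Str) : ∀ k, a ++ pw (b ++ a) k = pw (a ++ b) k ++ a := by
  intro k
  induction k with
  | zero => simp [pw_zero]
  | succ k ih =>
    rw [pw_succ, pw_succ,
      show a ++ ((b ++ a) ++ pw (b ++ a) k) = (a ++ b) ++ (a ++ pw (b ++ a) k) by
        simp [List.append_assoc],
      ih]
    simp [List.append_assoc]

/-- Pumping: if `s = u ++ t` with `t` a prefix of `s`, then `s` is a prefix
of a power of `u`. -/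
lemma pump (u : Str) (hu : u ≠ []) :
    ∀ n t s, t.length ≤ n → s = u ++ t → t <+: s → ∃ K, s <+: pw u K := by
  intro n
  induction n with
  | zero =>
    intro t s hlen hs _
    have ht : t = [] := List.eq_nil_of_length_eq_zero (Nat.le_zero.mp hlen)
    subst ht; subst hs
    exact ⟨1, by rw [pw_one]; simp⟩
  | succ n ih =>
    intro t s hlen hs hpre
    subst hs
    by_cases hle : t.length ≤ u.length
    · have ht : t = u.take t.length := by
        have := List.prefix_iff_eq_take.mp hpre
        rwa [List.take_append_of_le_length hle] at this
      refine ⟨2, ?_⟩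
      have : t <+: u := ht ▸ List.take_prefix _ _
      have h2 : pw u 2 = u ++ u := by
        rw [show (2:ℕ) = 1+1 from rfl, pw_add, pw_one]
      rw [h2]
      exact (List.prefix_append_right_inj u).mpr this
    · push_neg at hle
      set t' := t.take (t.length - u.length) with ht'
      have htu : t = u ++ t' := by
        have h1 := List.prefix_iff_eq_take.mp hpre
        rw [show t.length = u.length + (t.length - u.length) by omega,
          List.take_length_add_append] at h1
        exact h1
      have ht'pre : t' <+: t := List.take_prefix _ _
      have hulen : 1 ≤ u.length := List.length_pos_iff.mpr hu
      have hlen' : t'.length ≤ n := by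
        have : t'.length = t.length - u.length := by
          rw [ht', List.length_take]; omega
        omega
      obtain ⟨K, hK⟩ := ih t' t hlen' htu ht'pre
      exact ⟨K + 1, by rw [pw_succ]; exact (List.prefix_append_right_inj u).mpr hK⟩

lemma prefix_pow_factor (u : Str) (hu : u ≠ []) :
    ∀ K e, e <+: pw u K → u.length ≤ e.length →
      ∃ i, 1 ≤ i ∧ ∃ y, y <+: u ∧ e = pw u i ++ y := by
  intro K
  induction K with
  | zero =>
    intro e he hlen
    have h0 : e.length = 0 := Nat.le_zero.mp (by simpa [pw_zero] using he.length_le)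
    have hu1 : 1 ≤ u.length := List.length_pos_iff.mpr hu
    exact absurd (h0 ▸ hlen) (by omega)
  | succ K ih =>
    intro e he hlen
    rw [pw_succ] at he
    have heu : u <+: e := by
      have h1 := List.prefix_iff_eq_take.mp he
      have h2 : e.take u.length = u := by
        nth_rewrite 1 [h1]
        rw [List.take_take, min_eq_left hlen, List.take_append_of_le_length le_rfl]
        simp
      exact h2 ▸ List.take_prefix _ _
    obtain ⟨e', rfl⟩ := heu
    have he' : e' <+: pw u K := (List.prefix_append_right_inj u).mp he
    by_cases hle : u.length ≤ e'.length
    · obtain ⟨i, hi, y, hy, hey⟩ := ih e' he' hle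
      exact ⟨i + 1, by omega, y, hy, by rw [hey, pw_succ, List.append_assoc]⟩
    · push_neg at hle
      have : e' <+: u := by
        cases K with
        | zero =>
          have : e' = [] := List.eq_nil_of_length_eq_zero
            (Nat.le_zero.mp (he'.length_le.trans (by simp [pw_zero])))
          simp [this]
        | succ K =>
          rw [pw_succ] at he'
          have h1 := List.prefix_iff_eq_take.mp he'
          rw [List.take_append_of_le_length (le_of_lt hle)] at h1
          exact h1 ▸ List.take_prefix _ _
      exact ⟨1, le_rfl, e', this, by simp [pw_succ, pw_zero]⟩

lemma isFactor_of_prefix_pow {u e : Str} {K : ℕ} (hu : u ≠ [])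
    (he : e <+: pw u K) (hlen : u.length ≤ e.length) : IsFactor u e := by
  obtain ⟨i, hi, y, hy, hey⟩ := prefix_pow_factor u hu K e he hlen
  exact ⟨hu, i, hi, y, hy, hey⟩

lemma isFactor_self {s : Str} (hs : s ≠ []) : IsFactor s s :=
  ⟨hs, 1, le_rfl, [], ⟨s, by simp⟩, by simp [List.replicate_succ]⟩

lemma periodStr_le_of_isFactor {x s : Str} (h : IsFactor x s) : periodStr s ≤ x.length :=
  Nat.sInf_le ⟨x, h, rfl⟩

lemma exists_min_factor (s : Str) (hs : s ≠ []) :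
    ∃ x, IsFactor x s ∧ x.length = periodStr s := by
  have hne : {k | ∃ x : Str, IsFactor x s ∧ x.length = k}.Nonempty :=
    ⟨s.length, s, isFactor_self hs, rfl⟩
  exact Nat.sInf_mem hne

lemma factorStr_spec {s : Str} (hs : s ≠ []) :
    IsFactor (factorStr s) s ∧ (factorStr s).length = periodStr s := by
  rw [factorStr, dif_pos (exists_min_factor s hs)]
  exact (exists_min_factor s hs).choose_spec

lemma rc_pw (u : Str) (i : ℕ) : rc (pw u i) = pw (rc u) i := by
  induction i with
  | zero => rfl
  | succ i ih =>
    rw [pw_succ, rc_append, ih, pw_succ]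
    exact (pw_comm _ _).symm

lemma isFactor_rc {x s : Str} (h : IsFactor x s) :
    ∃ z, IsFactor z (rc s) ∧ z.length = x.length := by
  obtain ⟨hx, i, hi, y, hy, rfl⟩ := h
  obtain ⟨y2, rfl⟩ := hy
  refine ⟨rc y ++ rc y2, ⟨?_, i, hi, rc y, ⟨rc y2, rfl⟩, ?_⟩, ?_⟩
  · intro hcontr
    rcases List.append_eq_nil_iff.mp hcontr with ⟨h1, h2⟩
    rw [rc_eq_nil_iff] at h1 h2
    subst h1; subst h2; exact hx rfl
  · show rc ((pw (y ++ y2) i) ++ y) = _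
    rw [rc_append, rc_pw, rc_append]
    show rc y ++ pw (rc y2 ++ rc y) i = _
    rw [pw_conj]
    rfl
  · simp [rc_length]

lemma periodStr_rc (s : Str) : periodStr (rc s) = periodStr s := by
  have key : ∀ t : Str, t ≠ [] → periodStr (rc t) ≤ periodStr t := by
    intro t ht
    obtain ⟨x, hx, hlen⟩ := exists_min_factor t ht
    obtain ⟨z, hz, hzlen⟩ := isFactor_rc hx
    calc periodStr (rc t) ≤ z.length := periodStr_le_of_isFactor hz
      _ = periodStr t := by rw [hzlen, hlen]
  by_cases hs : s = []
  · subst hs; rfl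
  · have h1 := key s hs
    have h2 := key (rc s) (fun h => hs ((rc_eq_nil_iff s).mp h))
    rw [rc_rc] at h2
    omega

end Aux3
section Aux4
open List

/-- `z` occurs at position `t` in some power of `g`. -/
def occAt (g : Str) (t : ℕ) (z : Str) : Prop := ∃ K, z <+: (pw g K).drop t

lemma occAt_of_infix {g z : Str} {K : ℕ} (h : z <:+: pw g K) : ∃ t, occAt g t z := by
  obtain ⟨s₁, s₂, hs⟩ := h
  refine ⟨s₁.length, K, ?_⟩
  rw [← hs, List.append_assoc, List.drop_left]
  exact ⟨s₂, rfl⟩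

lemma occAt_elim {g z z' : Str} {t t' : ℕ} (h1 : occAt g t z) (h2 : occAt g t' z') :
    ∃ K, z <+: (pw g K).drop t ∧ z' <+: (pw g K).drop t' := by
  obtain ⟨K1, h1⟩ := h1
  obtain ⟨K2, h2⟩ := h2
  refine ⟨max K1 K2, ?_, ?_⟩
  · exact h1.trans ((pw_prefix_mono g (le_max_left K1 K2)).drop t)
  · exact h2.trans ((pw_prefix_mono g (le_max_right K1 K2)).drop t')

lemma occAt_add {g z : Str} {t : ℕ} (h : occAt g t z) : occAt g (t + g.length) z := by
  obtain ⟨K, hK⟩ := h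
  refine ⟨K + 1, ?_⟩
  rw [pw_succ, Nat.add_comm t g.length, List.drop_length_add_append]
  exact hK

lemma occAt_sub {g z : Str} {t : ℕ} (h : occAt g t z) (hle : g.length ≤ t) (hz : z ≠ []) :
    occAt g (t - g.length) z := by
  obtain ⟨K, hK⟩ := h
  cases K with
  | zero =>
    exfalso
    rw [pw_zero, List.drop_nil] at hK
    exact hz (List.prefix_nil.mp hK)
  | succ K =>
    refine ⟨K, ?_⟩
    rw [pw_succ, show t = g.length + (t - g.length) by omega, List.drop_length_add_append] at hK
    exact hK

lemma occAt_mod {g z : Str} (hg : g ≠ []) (hz : z ≠ []) :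
    ∀ t, occAt g t z → occAt g (t % g.length) z := by
  intro t
  induction t using Nat.strong_induction_on with
  | _ t ih =>
    intro h
    by_cases hlt : t < g.length
    · rwa [Nat.mod_eq_of_lt hlt]
    · push_neg at hlt
      have hg1 : 1 ≤ g.length := List.length_pos_iff.mpr hg
      have h2 := ih (t - g.length) (by omega) (occAt_sub h hlt hz)
      rwa [Nat.mod_eq_sub_mod hlt]

/-- Key overlap bound from two occurrences. -/
lemma dist_le_of_occ {g z z' : Str} {t t' : ℕ} (hz' : z' ≠ [])
    (h1 : occAt g t z) (h2 : occAt g t' z')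
    (hlt : t < t') (hni : z = z' ∨ ¬ z' <:+: z) :
    distStr z z' ≤ t' - t := by
  obtain ⟨K, hK1, hK2⟩ := occAt_elim h1 h2
  set G := pw g K with hG
  by_cases hcase : t + z.length ≤ t'
  · exact (distStr_le_length z z').trans (by omega)
  · push_neg at hcase
    set k := t' - t with hk
    have hk1 : 1 ≤ k := by omega
    have hkz : k < z.length := by omega
    obtain ⟨r, hr⟩ := hK1
    obtain ⟨r', hr'⟩ := hK2
    have hdrop : G.drop t' = z.drop k ++ r := by
      have : G.drop t' = (G.drop t).drop k := by rw [List.drop_drop, Nat.add_comm]; congr 1; omega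
      rw [this, ← hr, List.drop_append_of_le_length (by omega)]
    have heq : z.drop k ++ r = z' ++ r' := by rw [← hdrop, hr']
    have hlen : (z.drop k).length = z.length - k := by simp
    by_cases hlen2 : z'.length ≤ z.length - k
    · -- z' is a prefix of z.drop k, hence an infix of z: contradiction
      exfalso
      have hz'pre : z' <+: z.drop k := by
        have : z' = (z.drop k ++ r).take z'.length := by
          rw [heq, List.take_append_of_le_length le_rfl, List.take_length]
        rw [this, List.take_append_of_le_length (by omega)]
        exact List.take_prefix _ _
      have hinf : z' <:+: z := hz'pre.isInfix.trans (List.drop_suffix k z).isInfix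
      rcases hni with rfl | hni
      · omega
      · exact hni hinf
    · push_neg at hlen2
      have hvpre : z.drop k <+: z' := by
        have h3 : z.drop k = (z' ++ r').take (z.length - k) := by
          rw [← heq, ← hlen, List.take_append_of_le_length le_rfl, List.take_length]
        rw [h3, List.take_append_of_le_length (le_of_lt hlen2)]
        exact List.take_prefix _ _
      obtain ⟨w, hw⟩ := hvpre
      have hwne : w ≠ [] := by
        intro hcontr
        subst hcontr
        have := congrArg List.length hw
        simp at this
        omega
      have hov := le_ov (v := z.drop k) (u := z.take k) (w := w)
        (by
          have hlt : (z.take k).length = k := by rw [List.length_take]; omega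
          intro hcontr
          rw [hcontr] at hlt
          simp at hlt
          omega)
        hwne (List.take_append_drop k z).symm hw.symm
      have : distStr z z' ≤ z.length - (z.drop k).length := by
        unfold distStr; omega
      omega

lemma infix_or_of_occ_eq {g z z' : Str} {t : ℕ}
    (h1 : occAt g t z) (h2 : occAt g t z') : z <:+: z' ∨ z' <:+: z := by
  obtain ⟨K, hK1, hK2⟩ := occAt_elim h1 h2
  by_cases h : z.length ≤ z'.length
  · left
    obtain ⟨r', hr'⟩ := hK2
    have : z = (z' ++ r').take z.length := by
      rw [hr', ← List.prefix_iff_eq_take.mp hK1]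
    rw [this, List.take_append_of_le_length h] at *
    exact (List.take_prefix _ _).isInfix
  · right
    push_neg at h
    obtain ⟨r, hr⟩ := hK1
    have : z' = (z ++ r).take z'.length := by
      rw [hr, ← List.prefix_iff_eq_take.mp hK2]
    rw [this, List.take_append_of_le_length (by omega)]
    exact (List.take_prefix _ _).isInfix

end Aux4
section Aux5
open List

lemma pathW_sorted_le (g : Str) (sf : Str → ℕ) :
    ∀ (l : List Str) (x : Str),
      (∀ z ∈ x :: l, z ≠ [] ∧ occAt g (sf z) z) →
      (x :: l).Pairwise (fun a b => sf a < sf b) →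
      (∀ z ∈ x :: l, ∀ z' ∈ x :: l, z ≠ z' → ¬ z <:+: z') →
      pathW (x :: l) ≤ sf ((x :: l).getLast (List.cons_ne_nil _ _)) - sf x ∧
      sf x ≤ sf ((x :: l).getLast (List.cons_ne_nil _ _)) := by
  intro l
  induction l with
  | nil => intro x _ _ _; constructor <;> simp [pathW]
  | cons y r ih =>
    intro x hocc hpair hni
    have hxy : sf x < sf y := (List.pairwise_cons.mp hpair).1 y (by simp)
    have hocc' : ∀ z ∈ y :: r, z ≠ [] ∧ occAt g (sf z) z :=
      fun z hz => hocc z (List.mem_cons_of_mem x hz)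
    have hpair' := (List.pairwise_cons.mp hpair).2
    have hni' : ∀ z ∈ y :: r, ∀ z' ∈ y :: r, z ≠ z' → ¬ z <:+: z' :=
      fun z hz z' hz' => hni z (List.mem_cons_of_mem x hz) z' (List.mem_cons_of_mem x hz')
    obtain ⟨ih1, ih2⟩ := ih y hocc' hpair' hni'
    have hxney : x ≠ y := fun h => absurd hxy (by rw [h]; exact lt_irrefl _)
    have hdxy : distStr x y ≤ sf y - sf x := by
      refine dist_le_of_occ (hocc y (by simp)).1 (hocc x (by simp)).2
        (hocc y (by simp)).2 hxy (Or.inr ?_)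
      exact hni y (by simp) x (by simp) (Ne.symm hxney)
    rw [List.getLast_cons (List.cons_ne_nil _ _)]
    constructor
    · show distStr x y + pathW (y :: r) ≤ _
      omega
    · omega

lemma exists_cycle_of_occ (g : Str) (hg : g ≠ []) (sf : Str → ℕ)
    (L : List Str) (hL : L ≠ []) (hnd : L.Nodup)
    (hocc : ∀ z ∈ L, z ≠ [] ∧ occAt g (sf z) z ∧ sf z < g.length)
    (hinj : ∀ z ∈ L, ∀ z' ∈ L, z ≠ z' → sf z ≠ sf z')
    (hni : ∀ z ∈ L, ∀ z' ∈ L, z ≠ z' → ¬ z <:+: z') :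
    ∃ L', L'.Perm L ∧ cycleWeight L' ≤ g.length := by
  classical
  set r : Str → Str → Prop := fun a b => sf a ≤ sf b with hr
  haveI : DecidableRel r := fun a b => by unfold r; infer_instance
  haveI : IsTotal Str r := ⟨fun a b => le_total _ _⟩
  haveI : IsTrans Str r := ⟨fun a b c h1 h2 => le_trans h1 h2⟩
  set L' := List.insertionSort r L with hL'def
  have hperm : L'.Perm L := List.perm_insertionSort r L
  have hsor : L'.Pairwise r := List.pairwise_insertionSort r L
  have hmem : ∀ z, z ∈ L' ↔ z ∈ L := fun z => hperm.mem_iff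
  have hnd' : L'.Nodup := hperm.nodup_iff.mpr hnd
  have hp : L'.Pairwise (fun a b => sf a < sf b) := by
    have hcomb := hsor.and hnd'
    refine hcomb.imp_of_mem ?_
    intro a b ha hb ⟨hle, hne⟩
    exact lt_of_le_of_ne hle (hinj a ((hmem a).mp ha) b ((hmem b).mp hb) hne)
  have hL'ne : L' ≠ [] := by
    intro h
    have hlen := hperm.length_eq
    rw [h] at hlen
    simp at hlen
    exact hL (List.eq_nil_of_length_eq_zero hlen.symm)
  obtain ⟨x, xs, hxx⟩ := List.exists_cons_of_ne_nil hL'ne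
  refine ⟨L', hperm, ?_⟩
  have hocc' : ∀ z ∈ x :: xs, z ≠ [] ∧ occAt g (sf z) z := by
    intro z hz
    have := hocc z ((hmem z).mp (hxx ▸ hz))
    exact ⟨this.1, this.2.1⟩
  have hni' : ∀ z ∈ x :: xs, ∀ z' ∈ x :: xs, z ≠ z' → ¬ z <:+: z' := by
    intro z hz z' hz' hne
    exact hni z ((hmem z).mp (hxx ▸ hz)) z' ((hmem z').mp (hxx ▸ hz')) hne
  obtain ⟨hpath, hmono⟩ := pathW_sorted_le g sf xs x hocc' (hxx ▸ hp) hni'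
  set zl := (x :: xs).getLast (List.cons_ne_nil _ _) with hzl
  have hzlmem : zl ∈ x :: xs := List.getLast_mem _
  have hxmem : x ∈ x :: xs := by simp
  have hzlp : sf zl < g.length := (hocc zl ((hmem zl).mp (hxx ▸ hzlmem))).2.2
  have hwrap : distStr zl x ≤ (sf x + g.length) - sf zl := by
    refine dist_le_of_occ (hocc' x hxmem).1 (hocc' zl hzlmem).2
      (occAt_add (hocc' x hxmem).2) (by omega) ?_
    by_cases hcase : zl = x
    · exact Or.inl hcase
    · exact Or.inr (hni' x hxmem zl hzlmem (Ne.symm hcase))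
  rw [hxx, cycleWeight_eq]
  have heq : distStr ((x :: xs).getLast (List.cons_ne_nil _ _)) x = distStr zl x := rfl
  rw [heq]
  omega

end Aux5
section Aux6
open List

lemma superstr_ne_nil {c : List Str} (hne : c ≠ []) (hnil : ∀ z ∈ c, z ≠ []) :
    superstr c ≠ [] := by
  obtain ⟨x, r, rfl⟩ := List.exists_cons_of_ne_nil hne
  intro h
  have := head_prefix_superstr r x
  rw [h] at this
  exact hnil x (by simp) (List.prefix_nil.mp this)

lemma one_le_cycleWeight' {c : List Str} (hne : c ≠ []) (hnil : ∀ z ∈ c, z ≠ []) :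
    1 ≤ cycleWeight c := by
  obtain ⟨x, r, rfl⟩ := List.exists_cons_of_ne_nil hne
  exact one_le_cycleWeight x r hnil

lemma periodStr_superstr_le {c : List Str} (hne : c ≠ []) (hnil : ∀ z ∈ c, z ≠ []) :
    periodStr (superstr c) ≤ cycleWeight c := by
  obtain ⟨x₀, ct, rfl⟩ := List.exists_cons_of_ne_nil hne
  have hx₀ : x₀ ≠ [] := hnil x₀ (by simp)
  set s := superstr (x₀ :: (ct ++ [x₀])) with hsdef
  have hss : superstr ((x₀ :: ct) ++ [x₀]) = s := rfl
  have hhead : x₀ <+: s := head_prefix_superstr _ x₀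
  have hlast : x₀ <:+ s := by
    have h1 := getLast_suffix_superstr (ct ++ [x₀]) x₀
    have h2 : (x₀ :: (ct ++ [x₀])).getLast (List.cons_ne_nil _ _) = x₀ := by
      rw [List.getLast_eq_getElem]
      simp
    rwa [h2] at h1
  obtain ⟨u, hu⟩ := hlast
  have hslen : s.length = cycleWeight (x₀ :: ct) + x₀.length := by
    have h1 : s.length = pathW (x₀ :: (ct ++ [x₀]))
        + ((x₀ :: (ct ++ [x₀])).getLast (List.cons_ne_nil _ _)).length :=
      length_superstr _ _
    have h2 : (x₀ :: (ct ++ [x₀])).getLast (List.cons_ne_nil _ _) = x₀ := by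
      rw [List.getLast_eq_getElem]
      simp
    have h3 : pathW (x₀ :: (ct ++ [x₀])) = pathW ((x₀ :: ct) ++ [x₀]) := rfl
    have h4 : pathW ((x₀ :: ct) ++ [x₀]) = pathW (x₀ :: ct)
        + distStr ((x₀ :: ct).getLast (List.cons_ne_nil _ _)) x₀ :=
      pathW_snoc _ _ (List.cons_ne_nil _ _)
    rw [h1, h2, h3, h4, cycleWeight_eq]
  have hulen : u.length = cycleWeight (x₀ :: ct) := by
    have := congrArg List.length hu
    simp only [List.length_append] at this
    omega
  have hune : u ≠ [] := by
    intro h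
    have hw := one_le_cycleWeight x₀ ct hnil
    rw [h] at hulen
    simp at hulen
    omega
  obtain ⟨K, hK⟩ := pump u hune x₀.length x₀ s le_rfl hu.symm hhead
  have hpre : superstr (x₀ :: ct) <+: s :=
    hss ▸ superstr_prefix_snoc (x₀ :: ct) x₀ (List.cons_ne_nil _ _)
  have hlenge : u.length ≤ (superstr (x₀ :: ct)).length := by
    have h1 : (superstr (x₀ :: ct)).length = pathW (x₀ :: ct)
        + ((x₀ :: ct).getLast (List.cons_ne_nil _ _)).length := length_superstr _ _
    have h2 := distStr_le_length ((x₀ :: ct).getLast (List.cons_ne_nil _ _)) x₀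
    rw [hulen, cycleWeight_eq]
    omega
  have hfac : IsFactor u (superstr (x₀ :: ct)) :=
    isFactor_of_prefix_pow hune (hpre.trans hK) hlenge
  calc periodStr (superstr (x₀ :: ct)) ≤ u.length := periodStr_le_of_isFactor hfac
    _ = cycleWeight (x₀ :: ct) := hulen

end Aux6
section Main
open List

lemma xor_iff' {a b : Prop} : Xor' a b ↔ (a ∨ b) ∧ ¬(a ∧ b) := by
  unfold Xor' Xor; tauto

lemma main_aux (S : Finset Str) (hS : SubstrFree S)
    (C : Finset (List Str)) (hC : IsCycleCover S C)
    (hopt : ∀ C', IsCycleCover S C' → coverWeight C ≤ coverWeight C')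
    (c d : List Str) (hc : c ∈ C) (hd : d ∈ C) (hcd : c ≠ d) (bc bd : Bool) :
    ¬ EquivStr (cond bc (rc (superstr c)) (superstr c))
      (cond bd (rc (superstr d)) (superstr d)) := by
  classical
  obtain ⟨hCne, hCnd, hCdisj, hCmem, hCxor⟩ := hC
  -- basic facts about the cover
  have nilS : ([] : Str) ∉ S := by
    intro h
    have hx := hCxor [] h
    rw [rc_nil] at hx
    rcases hx with ⟨h1, h2⟩ | ⟨h1, h2⟩ <;> exact h2 h1
  have memne : ∀ cy ∈ C, ∀ z ∈ cy, z ≠ ([] : Str) := by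
    intro cy hcy z hz hznil
    subst hznil
    rcases hCmem cy hcy [] hz with h | h
    · exact nilS h
    · rw [rc_nil] at h; exact nilS h
  have no_rc : ∀ cy₀ ∈ C, ∀ cy₁ ∈ C, ∀ z₀ ∈ cy₀, ∀ z₁ ∈ cy₁, z₀ ≠ rc z₁ := by
    intro cy₀ h₀ cy₁ h₁ z₀ hz₀ z₁ hz₁ heq
    rcases hCmem cy₁ h₁ z₁ hz₁ with h | h
    · rcases hCxor z₁ h with ⟨_, h2⟩ | ⟨_, h2⟩
      · exact h2 ⟨cy₀, h₀, heq ▸ hz₀⟩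
      · exact h2 ⟨cy₁, h₁, hz₁⟩
    · rcases hCxor (rc z₁) h with ⟨_, h2⟩ | ⟨_, h2⟩
      · exact h2 ⟨cy₁, h₁, by rw [rc_rc]; exact hz₁⟩
      · exact h2 ⟨cy₀, h₀, heq ▸ hz₀⟩
  have h2cyc : ∀ cy₀ ∈ C, ∀ cy₁ ∈ C, ∀ z, z ∈ cy₀ → z ∈ cy₁ → cy₀ = cy₁ := by
    intro cy₀ h₀ cy₁ h₁ z hz₀ hz₁
    by_contra hne
    exact hCdisj cy₀ h₀ cy₁ h₁ hne z hz₀ hz₁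
  -- the flips
  set fc : Str → Str := fun z => cond bc (rc z) z with hfc_def
  set fd : Str → Str := fun z => cond bd (rc z) z with hfd_def
  have hfc_cases : (∀ z, fc z = z) ∨ (∀ z, fc z = rc z) := by
    cases bc
    · left; intro z; rfl
    · right; intro z; rfl
  have hfd_cases : (∀ z, fd z = z) ∨ (∀ z, fd z = rc z) := by
    cases bd
    · left; intro z; rfl
    · right; intro z; rfl
  have hfc_inj : Function.Injective fc := by
    rcases hfc_cases with h | h
    · intro a b hab; rw [h, h] at hab; exact hab
    · intro a b hab; rw [h, h] at hab; exact rc_injective hab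
  have hfd_inj : Function.Injective fd := by
    rcases hfd_cases with h | h
    · intro a b hab; rw [h, h] at hab; exact hab
    · intro a b hab; rw [h, h] at hab; exact rc_injective hab
  have hfc_ne : ∀ z : Str, z ≠ [] → fc z ≠ [] := by
    rcases hfc_cases with h | h <;> intro z hz <;> rw [h]
    · exact hz
    · rw [Ne, rc_eq_nil_iff]; exact hz
  have hfd_ne : ∀ z : Str, z ≠ [] → fd z ≠ [] := by
    rcases hfd_cases with h | h <;> intro z hz <;> rw [h]
    · exact hz
    · rw [Ne, rc_eq_nil_iff]; exact hz
  have hfc_S : ∀ z : Str, (z ∈ S ∨ rc z ∈ S) → (fc z ∈ S ∨ rc (fc z) ∈ S) := by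
    rcases hfc_cases with h | h <;> intro z hz <;> rw [h]
    · exact hz
    · rw [rc_rc]; exact hz.symm
  have hfd_S : ∀ z : Str, (z ∈ S ∨ rc z ∈ S) → (fd z ∈ S ∨ rc (fd z) ∈ S) := by
    rcases hfd_cases with h | h <;> intro z hz <;> rw [h]
    · exact hz
    · rw [rc_rc]; exact hz.symm
  -- the two superstrings
  have hcne : c ≠ [] := hCne c hc
  have hdne : d ≠ [] := hCne d hd
  have hcnil : ∀ z ∈ c, z ≠ [] := memne c hc
  have hdnil : ∀ z ∈ d, z ≠ [] := memne d hd
  have hene : superstr c ≠ [] := superstr_ne_nil hcne hcnil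
  have hfne : superstr d ≠ [] := superstr_ne_nil hdne hdnil
  have hXne : fc (superstr c) ≠ [] := hfc_ne _ hene
  have hYne : fd (superstr d) ≠ [] := hfd_ne _ hfne
  show ¬ EquivStr (fc (superstr c)) (fd (superstr d))
  intro hEq
  obtain ⟨a, b, hXab, hYba⟩ := hEq
  set X := fc (superstr c) with hXdef
  set Y := fd (superstr d) with hYdef
  set g : Str := a ++ b with hgdef
  obtain ⟨hfacX, hglen⟩ := factorStr_spec hXne
  rw [hXab] at hfacX hglen
  obtain ⟨hgne, i, hi, y, hy, hXeq⟩ := hfacX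
  obtain ⟨hfacY, hYlen⟩ := factorStr_spec hYne
  rw [hYba] at hfacY hYlen
  obtain ⟨hbane, j, hj, y', hy', hYeq⟩ := hfacY
  set p := g.length with hpdef
  have hp1 : 1 ≤ p := List.length_pos_iff.mpr hgne
  -- X and Y are infixes of powers of g
  have hXinf : X <:+: pw g (i + 1) := by
    have h1 : pw g (i + 1) = pw g i ++ g := by rw [pw_succ]; exact pw_comm g i
    have h2 : X <+: pw g (i + 1) := by
      rw [h1, show X = pw g i ++ y from hXeq]
      exact (List.prefix_append_right_inj _).mpr hy
    exact h2.isInfix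
  have hYinf : Y <:+: pw g (j + 2) := by
    have h1 : Y <+: pw (b ++ a) (j + 1) := by
      have h2 : pw (b ++ a) (j + 1) = pw (b ++ a) j ++ (b ++ a) := by
        rw [pw_succ]; exact pw_comm _ _
      rw [h2, show Y = pw (b ++ a) j ++ y' from hYeq]
      exact (List.prefix_append_right_inj _).mpr hy'
    have h3 : a ++ Y <+: a ++ pw (b ++ a) (j + 1) :=
      (List.prefix_append_right_inj a).mpr h1
    rw [pw_conj] at h3
    have h4 : pw g (j + 1) ++ a <+: pw g (j + 2) := by
      have h5 : pw g (j + 2) = pw g (j + 1) ++ g := by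
        rw [show j + 2 = (j + 1) + 1 from rfl, pw_add g (j+1) 1, pw_one]
      rw [h5]
      exact (List.prefix_append_right_inj _).mpr ⟨b, rfl⟩
    obtain ⟨t, ht⟩ := h3.trans h4
    exact ⟨a, t, by rw [← ht, List.append_assoc]⟩
  -- p is at most the weight of c
  have hpc : p ≤ cycleWeight c := by
    have h1 : p = periodStr X := hglen
    have h2 : periodStr X = periodStr (superstr c) := by
      rcases hfc_cases with h | h
      · rw [hXdef, h]
      · rw [hXdef, h, periodStr_rc]
    rw [h1, h2]
    exact periodStr_superstr_le hcne hcnil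
  have hwd : 1 ≤ cycleWeight d := one_le_cycleWeight' hdne hdnil
  -- the collection of strings for the new cycle
  set L : List Str := c.map fc ++ d.map fd with hLdef
  have hLchar : ∀ w, w ∈ L ↔ (∃ z ∈ c, fc z = w) ∨ (∃ z ∈ d, fd z = w) := by
    intro w
    rw [hLdef, List.mem_append, List.mem_map, List.mem_map]
  have hLne2 : L ≠ [] := by
    intro h
    have : fc (c.head hcne) ∈ L := by
      rw [hLchar]
      exact Or.inl ⟨c.head hcne, List.head_mem hcne, rfl⟩
    rw [h] at this
    simp at this
  have hLnil : ∀ w ∈ L, w ≠ [] := by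
    intro w hw
    rcases (hLchar w).mp hw with ⟨z, hz, rfl⟩ | ⟨z, hz, rfl⟩
    · exact hfc_ne z (hcnil z hz)
    · exact hfd_ne z (hdnil z hz)
  have hLS : ∀ w ∈ L, w ∈ S ∨ rc w ∈ S := by
    intro w hw
    rcases (hLchar w).mp hw with ⟨z, hz, rfl⟩ | ⟨z, hz, rfl⟩
    · exact hfc_S z (hCmem c hc z hz)
    · exact hfd_S z (hCmem d hd z hz)
  have hLnd : L.Nodup := by
    rw [hLdef, List.nodup_append']
    refine ⟨(hCnd c hc).map hfc_inj, (hCnd d hd).map hfd_inj, ?_⟩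
    intro w hw1 hw2
    obtain ⟨z₀, hz₀, rfl⟩ := List.mem_map.mp hw1
    obtain ⟨z₁, hz₁, heq⟩ := List.mem_map.mp hw2
    rcases hfc_cases with h | h <;> rcases hfd_cases with h' | h' <;>
      rw [h] at heq <;> rw [h'] at heq
    · subst heq; exact hCdisj c hc d hd hcd z₁ hz₀ hz₁
    · exact no_rc c hc d hd z₀ hz₀ z₁ hz₁ heq.symm
    · exact no_rc d hd c hc z₁ hz₁ z₀ hz₀ heq
    · have heq2 : z₁ = z₀ := rc_injective heq
      subst heq2
      exact hCdisj c hc d hd hcd z₁ hz₀ hz₁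
  have hLni : ∀ z ∈ L, ∀ z' ∈ L, z ≠ z' → ¬ z <:+: z' := by
    intro z hz z' hz' hne
    exact hS z (hLS z hz) z' (hLS z' hz') hne
  have hLpow : ∀ w ∈ L, ∃ n, w <:+: pw g n := by
    intro w hw
    rcases (hLchar w).mp hw with ⟨z, hz, rfl⟩ | ⟨z, hz, rfl⟩
    · have h1 : z <:+: superstr c := mem_infix_superstr c z hz
      have h2 : fc z <:+: X := by
        rcases hfc_cases with h | h
        · rw [h, hXdef, h]; exact h1
        · rw [h, hXdef, h]; exact rc_infix h1
      exact ⟨i + 1, h2.trans hXinf⟩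
    · have h1 : z <:+: superstr d := mem_infix_superstr d z hz
      have h2 : fd z <:+: Y := by
        rcases hfd_cases with h | h
        · rw [h, hYdef, h]; exact h1
        · rw [h, hYdef, h]; exact rc_infix h1
      exact ⟨j + 2, h2.trans hYinf⟩
  -- occurrence positions
  have hex : ∀ w ∈ L, ∃ t, t < p ∧ occAt g t w := by
    intro w hw
    obtain ⟨n, hn⟩ := hLpow w hw
    obtain ⟨t, ht⟩ := occAt_of_infix hn
    exact ⟨t % p, Nat.mod_lt _ (by omega), occAt_mod hgne (hLnil w hw) t ht⟩
  set sf : Str → ℕ := fun w => if h : ∃ t, t < p ∧ occAt g t w then h.choose else 0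
    with hsfdef
  have hsf : ∀ w ∈ L, sf w < p ∧ occAt g (sf w) w := by
    intro w hw
    have h := hex w hw
    rw [hsfdef]
    simp only [dif_pos h]
    exact ⟨h.choose_spec.1, h.choose_spec.2⟩
  have hinj : ∀ z ∈ L, ∀ z' ∈ L, z ≠ z' → sf z ≠ sf z' := by
    intro z hz z' hz' hne heq
    rcases infix_or_of_occ_eq (hsf z hz).2 (heq ▸ (hsf z' hz').2) with h | h
    · exact hLni z hz z' hz' hne h
    · exact hLni z' hz' z hz (Ne.symm hne) h
  obtain ⟨L', hperm, hwL'⟩ := exists_cycle_of_occ g hgne sf L hLne2 hLnd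
    (fun z hz => ⟨hLnil z hz, (hsf z hz).2, (hsf z hz).1⟩) hinj hLni
  have hL'mem : ∀ w, w ∈ L' ↔ w ∈ L := fun w => hperm.mem_iff
  -- the new cover
  set rest : Finset (List Str) := (C.erase c).erase d with hrest
  have hrest_char : ∀ cy, cy ∈ rest ↔ cy ≠ d ∧ cy ≠ c ∧ cy ∈ C := by
    intro cy
    rw [hrest, Finset.mem_erase, Finset.mem_erase]
  set C' : Finset (List Str) := insert L' rest with hC'def
  have hC'mem : ∀ cy, cy ∈ C' ↔ cy = L' ∨ cy ∈ rest := by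
    intro cy; rw [hC'def, Finset.mem_insert]
  -- membership characterization used repeatedly
  have char : ∀ w cy, cy ∈ C' → w ∈ cy →
      (∃ cy0, cy0 ∈ C ∧ cy0 ≠ c ∧ cy0 ≠ d ∧ w ∈ cy0) ∨
      (∃ z ∈ c, fc z = w) ∨ (∃ z ∈ d, fd z = w) := by
    intro w cy hcy hw
    rcases (hC'mem cy).mp hcy with rfl | hcy
    · rcases (hLchar w).mp ((hL'mem w).mp hw) with h | h
      · exact Or.inr (Or.inl h)
      · exact Or.inr (Or.inr h)
    · obtain ⟨h1, h2, h3⟩ := (hrest_char cy).mp hcy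
      exact Or.inl ⟨cy, h3, h2, h1, hw⟩
  -- the new cover is a cycle cover
  have hC'cover : IsCycleCover S C' := by
    refine ⟨?_, ?_, ?_, ?_, ?_⟩
    · -- nonempty cycles
      intro cy hcy
      rcases (hC'mem cy).mp hcy with rfl | hcy
      · intro h
        rw [h] at hperm
        exact hLne2 hperm.symm.eq_nil
      · exact hCne cy ((hrest_char cy).mp hcy).2.2
    · -- nodup
      intro cy hcy
      rcases (hC'mem cy).mp hcy with rfl | hcy
      · exact hperm.nodup_iff.mpr hLnd
      · exact hCnd cy ((hrest_char cy).mp hcy).2.2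
    · -- disjoint
      intro cy1 hcy1 cy2 hcy2 hne w hw1 hw2
      rcases (hC'mem cy1).mp hcy1 with rfl | h1 <;> rcases (hC'mem cy2).mp hcy2 with rfl | h2
      · exact hne rfl
      · -- w ∈ L', w ∈ cy2 ∈ rest
        obtain ⟨hd2, hc2, hC2⟩ := (hrest_char cy2).mp h2
        rcases (hLchar w).mp ((hL'mem w).mp hw1) with ⟨z, hz, heq⟩ | ⟨z, hz, heq⟩
        · rcases hfc_cases with h | h <;> rw [h] at heq
          · exact hCdisj c hc cy2 hC2 (Ne.symm hc2) z hz (heq ▸ hw2)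
          · exact no_rc cy2 hC2 c hc w (hw2) z hz heq.symm
        · rcases hfd_cases with h | h <;> rw [h] at heq
          · exact hCdisj d hd cy2 hC2 (Ne.symm hd2) z hz (heq ▸ hw2)
          · exact no_rc cy2 hC2 d hd w (hw2) z hz heq.symm
      · -- w ∈ cy1 ∈ rest, w ∈ L'
        obtain ⟨hd1, hc1, hC1⟩ := (hrest_char cy1).mp h1
        rcases (hLchar w).mp ((hL'mem w).mp hw2) with ⟨z, hz, heq⟩ | ⟨z, hz, heq⟩
        · rcases hfc_cases with h | h <;> rw [h] at heq
          · exact hCdisj c hc cy1 hC1 (Ne.symm hc1) z hz (heq ▸ hw1)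
          · exact no_rc cy1 hC1 c hc w (hw1) z hz heq.symm
        · rcases hfd_cases with h | h <;> rw [h] at heq
          · exact hCdisj d hd cy1 hC1 (Ne.symm hd1) z hz (heq ▸ hw1)
          · exact no_rc cy1 hC1 d hd w (hw1) z hz heq.symm
      · exact hCdisj cy1 ((hrest_char cy1).mp h1).2.2 cy2 ((hrest_char cy2).mp h2).2.2
          hne w hw1 hw2
    · -- membership in S
      intro cy hcy w hw
      rcases (hC'mem cy).mp hcy with rfl | hcy
      · exact hLS w ((hL'mem w).mp hw)
      · exact hCmem cy ((hrest_char cy).mp hcy).2.2 w hw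
    · -- Xor'
      intro s hs
      have horig := xor_iff'.mp (hCxor s hs)
      refine xor_iff'.mpr ⟨?_, ?_⟩
      · -- some occurrence survives
        have mk : ∀ w, w ∈ L → (∃ cy ∈ C', w ∈ cy) := by
          intro w hw
          exact ⟨L', (hC'mem L').mpr (Or.inl rfl), (hL'mem w).mpr hw⟩
        rcases horig.1 with ⟨cy, hcy, hsy⟩ | ⟨cy, hcy, hsy⟩
        · by_cases h1 : cy = c
          · subst h1
            rcases hfc_cases with h | h
            · exact Or.inl (mk s ((hLchar s).mpr (Or.inl ⟨s, hsy, h s⟩)))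
            · exact Or.inr (mk (rc s) ((hLchar (rc s)).mpr (Or.inl ⟨s, hsy, h s⟩)))
          · by_cases h2 : cy = d
            · subst h2
              rcases hfd_cases with h | h
              · exact Or.inl (mk s ((hLchar s).mpr (Or.inr ⟨s, hsy, h s⟩)))
              · exact Or.inr (mk (rc s) ((hLchar (rc s)).mpr (Or.inr ⟨s, hsy, h s⟩)))
            · exact Or.inl ⟨cy, (hC'mem cy).mpr (Or.inr ((hrest_char cy).mpr ⟨h2, h1, hcy⟩)),
                hsy⟩
        · by_cases h1 : cy = c
          · subst h1
            rcases hfc_cases with h | h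
            · exact Or.inr (mk (rc s) ((hLchar (rc s)).mpr (Or.inl ⟨rc s, hsy, h (rc s)⟩)))
            · exact Or.inl (mk s ((hLchar s).mpr (Or.inl ⟨rc s, hsy, (h (rc s)).trans (rc_rc s)⟩)))
          · by_cases h2 : cy = d
            · subst h2
              rcases hfd_cases with h | h
              · exact Or.inr (mk (rc s) ((hLchar (rc s)).mpr (Or.inr ⟨rc s, hsy, h (rc s)⟩)))
              · exact Or.inl (mk s ((hLchar s).mpr (Or.inr ⟨rc s, hsy, (h (rc s)).trans (rc_rc s)⟩)))
            · exact Or.inr ⟨cy, (hC'mem cy).mpr (Or.inr ((hrest_char cy).mpr ⟨h2, h1, hcy⟩)),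
                hsy⟩
      · -- not both
        rintro ⟨⟨cy1, hcy1, hs1⟩, ⟨cy2, hcy2, hs2⟩⟩
        have kill1 : ∀ cyA, cyA ∈ C → ∀ cyB, cyB ∈ C → s ∈ cyA → rc s ∈ cyB → False := by
          intro cyA hA cyB hB hsA hsB
          exact no_rc cyA hA cyB hB s (hsA) (rc s) hsB (by rw [rc_rc])
        rcases char s cy1 hcy1 hs1 with ⟨cy0, hcy0, hnc0, hnd0, hw0⟩ | ⟨z, hz, heq⟩ | ⟨z, hz, heq⟩ <;>
          rcases char (rc s) cy2 hcy2 hs2 with ⟨cy0', hcy0', hnc0', hnd0', hw0'⟩ | ⟨z', hz', heq'⟩ | ⟨z', hz', heq'⟩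
        · exact kill1 cy0 hcy0 cy0' hcy0' hw0 hw0'
        · rcases hfc_cases with h | h <;> rw [h] at heq'
          · exact kill1 cy0 hcy0 c hc hw0 (heq' ▸ hz')
          · have h3 : s ∈ c := by
              have := congrArg rc heq'
              rw [rc_rc, rc_rc] at this
              exact this ▸ hz'
            exact hnc0 (h2cyc cy0 hcy0 c hc s hw0 h3)
        · rcases hfd_cases with h | h <;> rw [h] at heq'
          · exact kill1 cy0 hcy0 d hd hw0 (heq' ▸ hz')
          · have h3 : s ∈ d := by
              have := congrArg rc heq'
              rw [rc_rc, rc_rc] at this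
              exact this ▸ hz'
            exact hnd0 (h2cyc cy0 hcy0 d hd s hw0 h3)
        · rcases hfc_cases with h | h <;> rw [h] at heq
          · exact kill1 c hc cy0' hcy0' (heq ▸ hz) hw0'
          · have h3 : rc s ∈ c := by
              have := congrArg rc heq
              rw [rc_rc] at this
              exact this ▸ hz
            exact hnc0' (h2cyc cy0' hcy0' c hc (rc s) hw0' h3)
        · rcases hfc_cases with h | h <;> rw [h] at heq heq'
          · exact kill1 c hc c hc (heq ▸ hz) (heq' ▸ hz')
          · have h3 : rc s ∈ c := by
              have := congrArg rc heq
              rw [rc_rc] at this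
              exact this ▸ hz
            have h4 : s ∈ c := by
              have := congrArg rc heq'
              rw [rc_rc, rc_rc] at this
              exact this ▸ hz'
            exact kill1 c hc c hc h4 h3
        · rcases hfc_cases with h | h <;> rw [h] at heq <;>
            rcases hfd_cases with h' | h' <;> rw [h'] at heq'
          · exact kill1 c hc d hd (heq ▸ hz) (heq' ▸ hz')
          · have h4 : s ∈ d := by
              have := congrArg rc heq'
              rw [rc_rc, rc_rc] at this
              exact this ▸ hz'
            exact hcd (h2cyc c hc d hd s (heq ▸ hz) h4)
          · have h3 : rc s ∈ c := by
              have := congrArg rc heq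
              rw [rc_rc] at this
              exact this ▸ hz
            exact hcd (h2cyc c hc d hd (rc s) h3 (heq' ▸ hz'))
          · have h3 : rc s ∈ c := by
              have := congrArg rc heq
              rw [rc_rc] at this
              exact this ▸ hz
            have h4 : s ∈ d := by
              have := congrArg rc heq'
              rw [rc_rc, rc_rc] at this
              exact this ▸ hz'
            exact kill1 d hd c hc h4 h3
        · rcases hfd_cases with h | h <;> rw [h] at heq
          · exact kill1 d hd cy0' hcy0' (heq ▸ hz) hw0'
          · have h3 : rc s ∈ d := by
              have := congrArg rc heq
              rw [rc_rc] at this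
              exact this ▸ hz
            exact hnd0' (h2cyc cy0' hcy0' d hd (rc s) hw0' h3)
        · rcases hfd_cases with h | h <;> rw [h] at heq <;>
            rcases hfc_cases with h' | h' <;> rw [h'] at heq'
          · exact kill1 d hd c hc (heq ▸ hz) (heq' ▸ hz')
          · have h4 : s ∈ c := by
              have := congrArg rc heq'
              rw [rc_rc, rc_rc] at this
              exact this ▸ hz'
            exact hcd (h2cyc c hc d hd s h4 (heq ▸ hz))
          · have h3 : rc s ∈ d := by
              have := congrArg rc heq
              rw [rc_rc] at this
              exact this ▸ hz
            exact hcd (h2cyc c hc d hd (rc s) (heq' ▸ hz') h3)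
          · have h3 : rc s ∈ d := by
              have := congrArg rc heq
              rw [rc_rc] at this
              exact this ▸ hz
            have h4 : s ∈ c := by
              have := congrArg rc heq'
              rw [rc_rc, rc_rc] at this
              exact this ▸ hz'
            exact kill1 c hc d hd h4 h3
        · rcases hfd_cases with h | h <;> rw [h] at heq heq'
          · exact kill1 d hd d hd (heq ▸ hz) (heq' ▸ hz')
          · have h3 : rc s ∈ d := by
              have := congrArg rc heq
              rw [rc_rc] at this
              exact this ▸ hz
            have h4 : s ∈ d := by
              have := congrArg rc heq'
              rw [rc_rc, rc_rc] at this
              exact this ▸ hz'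
            exact kill1 d hd d hd h4 h3
  -- weights
  have e1 : ∑ x ∈ C.erase c, cycleWeight x + cycleWeight c = ∑ x ∈ C, cycleWeight x :=
    Finset.sum_erase_add _ _ hc
  have e2 : ∑ x ∈ (C.erase c).erase d, cycleWeight x + cycleWeight d
      = ∑ x ∈ C.erase c, cycleWeight x :=
    Finset.sum_erase_add _ _ (Finset.mem_erase.mpr ⟨fun h => hcd h.symm, hd⟩)
  have hw2 : coverWeight C' ≤ cycleWeight L' + ∑ x ∈ rest, cycleWeight x := by
    rw [hC'def]
    show ∑ x ∈ insert L' rest, cycleWeight x ≤ _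
    by_cases hmem : L' ∈ rest
    · rw [Finset.insert_eq_self.mpr hmem]; omega
    · rw [Finset.sum_insert hmem]
  have hfinal := hopt C' hC'cover
  have hCW : coverWeight C = ∑ x ∈ C, cycleWeight x := rfl
  have hrestW : ∑ x ∈ rest, cycleWeight x = ∑ x ∈ (C.erase c).erase d, cycleWeight x := rfl
  omega

end Main
/-- the strings corresponding to two distinct cycles of an optimal cycle
cover are inequivalent, and so are their reverse-complement combinations. -/
theorem cycles_inequivalent
    (S : Finset Str) (hS : SubstrFree S)
    (C : Finset (List Str)) (hC : IsCycleCover S C)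
    (hopt : ∀ C', IsCycleCover S C' → coverWeight C ≤ coverWeight C')
    (c d : List Str) (hc : c ∈ C) (hd : d ∈ C) (hcd : c ≠ d) :
    ¬ EquivStr (superstr c) (superstr d) ∧
    ¬ EquivStr (superstr c) (rc (superstr d)) ∧
    ¬ EquivStr (rc (superstr c)) (superstr d) ∧
    ¬ EquivStr (rc (superstr c)) (rc (superstr d)) := by
  exact ⟨main_aux S hS C hC hopt c d hc hd hcd false false,
    main_aux S hS C hC hopt c d hc hd hcd false true,
    main_aux S hS C hC hopt c d hc hd hcd true false,
    main_aux S hS C hC hopt c d hc hd hcd true true⟩
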